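/- arXiv:1903.04322 — 5 statements merged into one kernel-verified Lean document; each statement's English description precedes it below -/
import Mathlib

section
/- The linear map S commutes with ⋀^n(J_{2n}), i.e., S ∘ ⋀^n(J_{2n}) = ⋀^n(J_{2n}) ∘ S as endomorphisms of ⋀^n(ℂ^{2n}). -/
open Matrix

/-- The set of `n`-element subsets of `{1, …, 2n}` (realized as `Fin (2*n)`), indexing the
standard basis `e_I = e_{i₁} ∧ ⋯ ∧ e_{iₙ}` of the `n`-th exterior power `⋀ⁿ(ℂ^{2n})`. -/
abbrev Idx (n : ℕ) := {I : Finset (Fin (2 * n)) // I.card = n}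

/-- The matrix of the induced linear map `⋀ⁿ(g)` on `⋀ⁿ(ℂ^{2n})` in the standard basis
`{e_I}`: its `(I, J)` entry is the `n × n` minor of `g` with rows `I` and columns `J`
(both taken in increasing order), i.e. the coefficient of `e_I` in `⋀ⁿ(g)(e_J)`. -/
noncomputable def wedgePow (n : ℕ) (g : Matrix (Fin (2 * n)) (Fin (2 * n)) ℂ) :
    Matrix (Idx n) (Idx n) ℂ := fun I J =>
  Matrix.det (Matrix.of fun a b : Fin n =>
    g ((I.1.orderIsoOfFin I.2 a).1) ((J.1.orderIsoOfFin J.2 b).1))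

/-- `qCoeff n I J = q(e_I, e_J)`, the coefficient of `e_1 ∧ ⋯ ∧ e_{2n}` in `e_I ∧ e_J`:
it is `0` unless `J = Iᶜ`, in which case it is the sign `(-1)^{#{(i,j) ∈ I × J : i > j}}`
obtained by sorting the concatenation of the increasing enumerations of `I` and `J`. -/
noncomputable def qCoeff (n : ℕ) (I J : Idx n) : ℂ :=
  if (J : Finset (Fin (2 * n))) = (I : Finset (Fin (2 * n)))ᶜ then
    (-1 : ℂ) ^ (((I.1 ×ˢ J.1).filter fun p => p.2 < p.1).card)
  else 0

/-- The bilinear form `q` on `⋀ⁿ(ℂ^{2n})` defined by `v ∧ w = q(v, w) • e_1 ∧ ⋯ ∧ e_{2n}`,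
written in coordinates with respect to the basis `{e_I}` (a vector of `⋀ⁿ(ℂ^{2n})` is
recorded by its coordinate function `Idx n → ℂ`). -/
noncomputable def q (n : ℕ) (v w : Idx n → ℂ) : ℂ :=
  ∑ I : Idx n, ∑ J : Idx n, v I * w J * qCoeff n I J

/-- The basis vector `e_I` of `⋀ⁿ(ℂ^{2n})`, in coordinates. -/
noncomputable def eVec (n : ℕ) (I : Idx n) : Idx n → ℂ :=
  fun J => if J = I then 1 else 0

/-- The complement `Iᶜ` of an `n`-element subset of `{1, …, 2n}`. -/
def complIdx (n : ℕ) (I : Idx n) : Idx n :=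
  ⟨(I : Finset (Fin (2 * n)))ᶜ, by
    rw [Finset.card_compl, I.2, Fintype.card_fin]; omega⟩

/-- The matrix (in the basis `{e_I}`) of the linear map `S` on `⋀ⁿ(ℂ^{2n})` defined by
`S(e_I) = q(e_{Iᶜ}, e_I) • e_{Iᶜ}`. -/
noncomputable def Smat (n : ℕ) : Matrix (Idx n) (Idx n) ℂ := fun I J =>
  if I = complIdx n J then qCoeff n (complIdx n J) J else 0

/-- The `n × n` matrix `w_n` with entries `1` at positions `(i, n+1-i)` and `0` elsewhere. -/
noncomputable def wnMat (n : ℕ) : Matrix (Fin n) (Fin n) ℂ := fun i j =>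
  if (i : ℕ) + (j : ℕ) + 1 = n then 1 else 0

/-- The `2n × 2n` matrix `J_{2n}` with block form `[[0, wₙ], [-wₙ, 0]]`. -/
noncomputable def JMat (n : ℕ) : Matrix (Fin (2 * n)) (Fin (2 * n)) ℂ :=
  Matrix.reindex (finSumFinEquiv.trans (finCongr (by omega)))
    (finSumFinEquiv.trans (finCongr (by omega)))
    (Matrix.fromBlocks 0 (wnMat n) (-(wnMat n)) 0)

/-- The matrix of the endomorphism `A = S ∘ ⋀ⁿ(J_{2n})` of `⋀ⁿ(ℂ^{2n})`. -/
noncomputable def Amat (n : ℕ) : Matrix (Idx n) (Idx n) ℂ :=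
  Smat n * wedgePow n (JMat n)

/-- sign of column `j` of `J`. -/
noncomputable def eps (n : ℕ) (j : Fin (2 * n)) : ℂ := if (j : ℕ) < n then -1 else 1

lemma sumEquiv_symm (n : ℕ) (h : n + n = 2 * n) (i : Fin (2 * n)) :
    (finSumFinEquiv.trans (finCongr h)).symm i =
      if hi : (i : ℕ) < n then Sum.inl ⟨i, hi⟩ else Sum.inr ⟨(i : ℕ) - n, by omega⟩ := by
  rw [Equiv.symm_apply_eq]
  split
  · simp [Fin.ext_iff]
  · simp [Fin.ext_iff]; omega

lemma JMat_apply (n : ℕ) (i j : Fin (2 * n)) :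
    JMat n i j = if i = j.rev then eps n j else 0 := by
  have hval : ((j.rev : ℕ)) = 2 * n - (j + 1) := by rw [Fin.val_rev]
  rw [JMat, Matrix.reindex_apply, Matrix.submatrix_apply, sumEquiv_symm, sumEquiv_symm]
  rcases lt_or_ge (i : ℕ) n with hi | hi <;> rcases lt_or_ge (j : ℕ) n with hj | hj
  · rw [dif_pos hi, dif_pos hj]
    have : ¬ i = j.rev := by
      rw [Fin.ext_iff, hval]; omega
    simp [this]
  · rw [dif_pos hi, dif_neg (by omega)]
    have hcond : (i : ℕ) + ((j : ℕ) - n) + 1 = n ↔ i = j.rev := by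
      rw [Fin.ext_iff, hval]; omega
    simp only [Matrix.fromBlocks_apply₁₂, wnMat, eps, if_neg (by omega : ¬ (j:ℕ) < n)]
    rw [show ((⟨(i:ℕ), hi⟩ : Fin n) : ℕ) = (i : ℕ) from rfl]
    split_ifs with h1 h2 h2 <;> first | rfl | (exact absurd (hcond.mp h1) h2) | (exact absurd (hcond.mpr h2) h1)
  · rw [dif_neg (by omega), dif_pos hj]
    have hcond : ((i : ℕ) - n) + (j : ℕ) + 1 = n ↔ i = j.rev := by
      rw [Fin.ext_iff, hval]; omega
    simp only [Matrix.fromBlocks_apply₂₁, Matrix.neg_apply, wnMat, eps,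
      if_pos hj]
    split_ifs with h1 h2 h2 <;>
      first | (exact absurd (hcond.mp h1) h2) | (exact absurd (hcond.mpr h2) h1) | norm_num
  · rw [dif_neg (by omega), dif_neg (by omega)]
    have : ¬ i = j.rev := by
      rw [Fin.ext_iff, hval]; omega
    simp [this]

lemma mem_image_rev {n : ℕ} (S : Finset (Fin (2 * n))) (x : Fin (2 * n)) :
    x ∈ S.image Fin.rev ↔ x.rev ∈ S := by
  simp only [Finset.mem_image]
  constructor
  · rintro ⟨a, ha, rfl⟩; rwa [Fin.rev_rev]
  · intro h; exact ⟨x.rev, h, Fin.rev_rev x⟩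

lemma compl_image_rev {n : ℕ} (S : Finset (Fin (2 * n))) :
    (S.image Fin.rev)ᶜ = Sᶜ.image Fin.rev := by
  ext x
  rw [Finset.mem_compl, mem_image_rev, mem_image_rev, Finset.mem_compl]

lemma card_image_rev {n : ℕ} (S : Finset (Fin (2 * n))) :
    (S.image Fin.rev).card = S.card :=
  Finset.card_image_of_injective _ Fin.rev_injective

/-- the minor formula for `⋀ⁿ J`. -/
lemma wedge_JMat (n : ℕ) (A B : Idx n) :
    wedgePow n (JMat n) A B =
      if A.1 = B.1.image Fin.rev then
        ((Equiv.Perm.sign (Fin.revPerm : Equiv.Perm (Fin n)) : ℤ) : ℂ) * ∏ b ∈ B.1, eps n b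
      else 0 := by
  rw [wedgePow]
  split_ifs with hAB
  · -- the enumeration of A is rev composed with reversed enumeration of B
    have key : ∀ a : Fin n, ((A.1.orderIsoOfFin A.2 a) : Fin (2 * n)) =
        ((B.1.orderIsoOfFin B.2 a.rev) : Fin (2 * n)).rev := by
      have hmono : StrictMono (fun a : Fin n =>
          ((B.1.orderIsoOfFin B.2 a.rev) : Fin (2 * n)).rev) := by
        intro a b hab
        rw [Fin.rev_lt_rev]
        exact Subtype.coe_lt_coe.mpr ((B.1.orderIsoOfFin B.2).strictMono (Fin.rev_lt_rev.mpr hab))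
      have hmem : ∀ a : Fin n,
          ((B.1.orderIsoOfFin B.2 a.rev) : Fin (2 * n)).rev ∈ A.1 := by
        intro a
        rw [hAB, mem_image_rev, Fin.rev_rev]
        exact (B.1.orderIsoOfFin B.2 a.rev).2
      have := Finset.orderEmbOfFin_unique A.2 hmem hmono
      intro a
      rw [Finset.coe_orderIsoOfFin_apply, ← this]
    have hM : (Matrix.of fun a b : Fin n =>
        JMat n ((A.1.orderIsoOfFin A.2 a) : Fin (2 * n)) ((B.1.orderIsoOfFin B.2 b) : Fin (2 * n)))
        = (Matrix.diagonal (fun b : Fin n => eps n ((B.1.orderIsoOfFin B.2 b) : Fin (2 * n)))).submatrix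
            (Fin.revPerm : Equiv.Perm (Fin n)) id := by
      ext a b
      rw [Matrix.of_apply, JMat_apply, key, Matrix.submatrix_apply, id_eq]
      have hiff : (((B.1.orderIsoOfFin B.2 a.rev) : Fin (2 * n)).rev =
          ((B.1.orderIsoOfFin B.2 b) : Fin (2 * n)).rev) ↔ Fin.revPerm a = b := by
        rw [Fin.rev_inj]
        constructor
        · intro h
          have := (B.1.orderIsoOfFin B.2).injective (Subtype.ext h)
          simpa using this
        · rintro rfl; rfl
      rw [Matrix.diagonal]
      by_cases h : Fin.revPerm a = b
      · rw [if_pos (hiff.mpr h), Matrix.of_apply, if_pos h, h]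
      · rw [if_neg (fun hh => h (hiff.mp hh)), Matrix.of_apply, if_neg h]
    rw [hM, Matrix.det_permute, Matrix.det_diagonal]
    congr 1
    -- product over Fin n equals product over B
    rw [← Finset.prod_attach B.1 (fun x => eps n x)]
    exact Fintype.prod_equiv (B.1.orderIsoOfFin B.2).toEquiv _ _ (fun b => rfl)
  · -- some column is zero
    have hsub : ¬ B.1.image Fin.rev ⊆ A.1 := by
      intro hsub
      exact hAB (Finset.eq_of_subset_of_card_le hsub (by rw [card_image_rev, A.2, B.2])).symm
    obtain ⟨x, hxB, hxA⟩ := Finset.not_subset.mp hsub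
    rw [mem_image_rev] at hxB
    set b0 : Fin n := (B.1.orderIsoOfFin B.2).symm ⟨x.rev, hxB⟩ with hb0
    apply Matrix.det_eq_zero_of_column_eq_zero b0
    intro a
    rw [Matrix.of_apply, JMat_apply]
    have : ((B.1.orderIsoOfFin B.2 b0) : Fin (2 * n)) = x.rev := by
      rw [hb0, OrderIso.apply_symm_apply]
    rw [this, Fin.rev_rev, if_neg]
    intro h
    exact hxA (h ▸ (A.1.orderIsoOfFin A.2 a).2)

lemma complIdx_complIdx (n : ℕ) (I : Idx n) : complIdx n (complIdx n I) = I :=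
  Subtype.ext (compl_compl _)

lemma filt_card (n : ℕ) (K : Finset (Fin (2 * n))) :
    ((((Kᶜ).image Fin.rev) ×ˢ (K.image Fin.rev)).filter fun p => p.2 < p.1).card
      = ((Kᶜ ×ˢ K).filter fun p => p.1 < p.2).card := by
  have hset : ((((Kᶜ).image Fin.rev) ×ˢ (K.image Fin.rev)).filter fun p => p.2 < p.1)
      = (((Kᶜ ×ˢ K).filter fun p => p.1 < p.2)).image
          (Prod.map Fin.rev Fin.rev) := by
    ext ⟨x, y⟩
    rw [Finset.mem_filter, Finset.mem_product, mem_image_rev, mem_image_rev, Finset.mem_image]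
    constructor
    · rintro ⟨⟨hx, hy⟩, hlt⟩
      refine ⟨(x.rev, y.rev), ?_, ?_⟩
      · rw [Finset.mem_filter, Finset.mem_product]
        exact ⟨⟨hx, hy⟩, Fin.rev_lt_rev.mpr hlt⟩
      · show (x.rev.rev, y.rev.rev) = (x, y)
        rw [Fin.rev_rev, Fin.rev_rev]
    · rintro ⟨⟨a, b⟩, hab, heq⟩
      rw [Finset.mem_filter, Finset.mem_product] at hab
      obtain ⟨⟨ha, hb⟩, hlt⟩ := hab
      have hx : x = a.rev := (congrArg Prod.fst heq).symm
      have hy : y = b.rev := (congrArg Prod.snd heq).symm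
      subst hx; subst hy
      exact ⟨⟨by rwa [Fin.rev_rev], by rwa [Fin.rev_rev]⟩, Fin.rev_lt_rev.mpr hlt⟩
  rw [hset]
  exact Finset.card_image_of_injective _
    (Fin.rev_injective.prodMap Fin.rev_injective)

lemma filt_sum (n : ℕ) (K : Finset (Fin (2 * n))) (hK : K.card = n) :
    ((Kᶜ ×ˢ K).filter fun p => p.1 < p.2).card
      + ((Kᶜ ×ˢ K).filter fun p => p.2 < p.1).card = n * n := by
  have h := Finset.card_filter_add_card_filter_not
    (s := Kᶜ ×ˢ K) (p := fun p => p.1 < p.2)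
  have hcong : (Kᶜ ×ˢ K).filter (fun p => ¬ p.1 < p.2)
      = (Kᶜ ×ˢ K).filter (fun p => p.2 < p.1) := by
    apply Finset.filter_congr
    intro p hp
    rw [Finset.mem_product] at hp
    have hne : p.1 ≠ p.2 := fun he => (Finset.mem_compl.mp hp.1) (he ▸ hp.2)
    simp only [not_lt]
    exact ⟨fun hle => lt_of_le_of_ne hle (fun h => hne h.symm), fun h => h.le⟩
  rw [hcong] at h
  rw [h, Finset.card_product, Finset.card_compl, hK, Fintype.card_fin]
  have : 2 * n - n = n := by omega
  rw [this]

lemma eps_sq (n : ℕ) (S : Finset (Fin (2 * n))) :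
    (∏ k ∈ S, eps n k) * (∏ k ∈ S, eps n k) = 1 := by
  rw [← Finset.prod_mul_distrib]
  apply Finset.prod_eq_one
  intro x _
  rw [eps]
  split_ifs <;> norm_num

lemma eps_univ (n : ℕ) : (∏ k : Fin (2 * n), eps n k) = (-1 : ℂ) ^ n := by
  have hcard : (Finset.univ.filter fun j : Fin (2 * n) => (j : ℕ) < n).card = n := by
    rw [← Fintype.card_subtype]
    rw [Fintype.card_congr
      (⟨fun x => (⟨x.1.1, x.2⟩ : Fin n), fun a => ⟨⟨a.1, by omega⟩, a.2⟩,
        fun x => by apply Subtype.ext; apply Fin.ext; rfl,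
        fun a => by apply Fin.ext; rfl⟩ :
        {x : Fin (2 * n) // (x : ℕ) < n} ≃ Fin n)]
    exact Fintype.card_fin n
  unfold eps
  rw [Finset.prod_ite, Finset.prod_const, Finset.prod_const, hcard, one_pow, mul_one]


/-- The linear map `S` commutes with `⋀ⁿ(J_{2n})`:
`S ∘ ⋀ⁿ(J_{2n}) = ⋀ⁿ(J_{2n}) ∘ S` as endomorphisms of `⋀ⁿ(ℂ^{2n})`. -/
theorem Smat_commute_wedgePow_JMat (n : ℕ) (hn : 1 ≤ n) :
    Smat n * wedgePow n (JMat n) = wedgePow n (JMat n) * Smat n := by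
  ext I K
  rw [Matrix.mul_apply, Matrix.mul_apply]
  have hL : ∀ J : Idx n, Smat n I J * wedgePow n (JMat n) J K =
      if J = complIdx n I then
        qCoeff n I (complIdx n I) * wedgePow n (JMat n) (complIdx n I) K else 0 := by
    intro J
    by_cases hJ : J = complIdx n I
    · subst hJ
      rw [if_pos rfl, Smat, if_pos (complIdx_complIdx n I).symm, complIdx_complIdx]
    · rw [if_neg hJ, Smat, if_neg, zero_mul]
      intro h
      exact hJ (by rw [h, complIdx_complIdx])
  have hR : ∀ J : Idx n, wedgePow n (JMat n) I J * Smat n J K =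
      if J = complIdx n K then
        wedgePow n (JMat n) I (complIdx n K) * qCoeff n (complIdx n K) K else 0 := by
    intro J
    by_cases hJ : J = complIdx n K
    · subst hJ; rw [if_pos rfl, Smat, if_pos rfl]
    · rw [if_neg hJ, Smat, if_neg hJ, mul_zero]
  simp only [hL, hR]
  rw [Finset.sum_ite_eq' Finset.univ, Finset.sum_ite_eq' Finset.univ,
    if_pos (Finset.mem_univ _), if_pos (Finset.mem_univ _)]
  rw [wedge_JMat, wedge_JMat]
  have hKc : (complIdx n K).1 = K.1ᶜ := rfl
  have hIc : (complIdx n I).1 = I.1ᶜ := rfl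
  by_cases hc : I.1 = (K.1)ᶜ.image Fin.rev
  · have hc1 : (complIdx n I).1 = K.1.image Fin.rev := by
      rw [hIc, hc, compl_image_rev, compl_compl]
    rw [if_pos hc1, if_pos (by rw [hKc]; exact hc)]
    rw [qCoeff, qCoeff, if_pos hIc,
      if_pos (show (K : Finset (Fin (2*n))) = ((complIdx n K : Finset (Fin (2*n))))ᶜ by
        rw [hKc, compl_compl])]
    have hN : ((I.1 ×ˢ (complIdx n I).1).filter fun p => p.2 < p.1).card
        = (((K.1)ᶜ ×ˢ K.1).filter fun p => p.1 < p.2).card := by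
      rw [hc, hc1]
      exact filt_card n K.1
    rw [hN, hKc]
    set s := ((Equiv.Perm.sign (Fin.revPerm : Equiv.Perm (Fin n)) : ℤ) : ℂ) with hs
    set P := ∏ b ∈ K.1, eps n b with hP
    set Pc := ∏ b ∈ (K.1)ᶜ, eps n b with hPcdef
    set N1 := (((K.1)ᶜ ×ˢ K.1).filter fun p => p.1 < p.2).card with hN1
    set N2 := (((K.1)ᶜ ×ˢ K.1).filter fun p => p.2 < p.1).card with hN2
    have hsum : N1 + N2 = n * n := filt_sum n K.1 K.2
    have hPP : P * P = 1 := eps_sq n K.1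
    have hPPc : P * Pc = (-1 : ℂ) ^ n := by
      rw [hP, hPcdef, Finset.prod_mul_prod_compl, eps_univ]
    have h2 : ((-1 : ℂ)) ^ N1 * (-1) ^ N2 = (-1) ^ (n * n) := by rw [← pow_add, hsum]
    have h3 : ((-1 : ℂ)) ^ (n * n) = (-1) ^ n := by
      rcases Nat.even_or_odd n with h | h
      · rw [(h.mul_left n).neg_one_pow, h.neg_one_pow]
      · rw [(h.mul h).neg_one_pow, h.neg_one_pow]
    have h4 : ((-1 : ℂ)) ^ N2 * (-1) ^ N2 = 1 := by
      rw [← pow_add]; exact Even.neg_one_pow ⟨N2, rfl⟩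
    have key : ((-1 : ℂ)) ^ N1 * P = Pc * (-1) ^ N2 := by
      have hb : ((-1 : ℂ)) ^ N1 = (-1) ^ n * (-1) ^ N2 := by
        calc ((-1 : ℂ)) ^ N1 = (-1) ^ N1 * ((-1) ^ N2 * (-1) ^ N2) := by rw [h4, mul_one]
        _ = ((-1) ^ N1 * (-1) ^ N2) * (-1) ^ N2 := by ring
        _ = (-1) ^ n * (-1) ^ N2 := by rw [h2, h3]
      have hPc : Pc = (-1 : ℂ) ^ n * P := by
        calc Pc = (P * P) * Pc := by rw [hPP, one_mul]
        _ = (P * Pc) * P := by ring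
        _ = (-1) ^ n * P := by rw [hPPc]
      rw [hb, hPc]; ring
    linear_combination s * key
  · have hc1 : ¬ (complIdx n I).1 = K.1.image Fin.rev := by
      intro h
      apply hc
      rw [← compl_compl I.1, show (I.1)ᶜ = K.1.image Fin.rev from hIc ▸ h, compl_image_rev]
    rw [if_neg hc1, if_neg (by rw [hKc]; exact hc), mul_zero, zero_mul]
end

section
/- For every invertible 2n×2n complex matrix g, one has A ∘ ⋀^n(g) ∘ A = det(g) · ⋀^n(J_{2n} · (gᵀ)⁻¹ · J_{2n}⁻¹) as endomorphisms of ⋀^n(ℂ^{2n}) (note A⁻¹ = A). -/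
open Matrix

namespace AmatAux

variable {n : ℕ}

/-- The increasing enumeration of an `n`-element subset of `Fin (2n)`. -/
noncomputable def emb (I : Idx n) : Fin n → Fin (2 * n) := fun a => (I.1.orderIsoOfFin I.2 a : Fin (2 * n))

lemma emb_mem (I : Idx n) (a : Fin n) : emb I a ∈ I.1 := (I.1.orderIsoOfFin I.2 a).2

lemma emb_injective (I : Idx n) : Function.Injective (emb I) := fun a b h => by
  simpa using (I.1.orderIsoOfFin I.2).injective (Subtype.ext h)

lemma emb_strictMono (I : Idx n) : StrictMono (emb I) := fun a b h => by
  exact (I.1.orderIsoOfFin I.2).lt_iff_lt.mpr h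

lemma wedgePow_apply (g : Matrix (Fin (2 * n)) (Fin (2 * n)) ℂ) (I J : Idx n) :
    wedgePow n g I J = Matrix.det (Matrix.of fun a b : Fin n => g (emb I a) (emb J b)) := rfl

/-- `n`-tuple of standard basis vectors indexed by the elements of `I`. -/
noncomputable def eV (I : Idx n) : Fin n → Fin (2 * n) → ℂ := fun a => Pi.single (emb I a) 1

/-- The minor alternating map: `v ↦ det (v a (emb J b))_{a b}`. -/
noncomputable def minorMap (J : Idx n) : (Fin (2 * n) → ℂ) [⋀^Fin n]→ₗ[ℂ] ℂ :=
  (Matrix.detRowAlternating).compLinearMap (LinearMap.funLeft ℂ ℂ (emb J))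

lemma minorMap_apply (J : Idx n) (u : Fin n → Fin (2 * n) → ℂ) :
    minorMap J u = Matrix.det (Matrix.of fun a b : Fin n => u a (emb J b)) := rfl

lemma altSum_apply {α : Type*} (s : Finset α) (f : α → ((Fin (2 * n) → ℂ) [⋀^Fin n]→ₗ[ℂ] ℂ))
    (u : Fin n → Fin (2 * n) → ℂ) : (∑ a ∈ s, f a) u = ∑ a ∈ s, f a u := by
  induction s using Finset.cons_induction with
  | empty => simp
  | cons a s ha ih => rw [Finset.sum_cons, Finset.sum_cons, AlternatingMap.add_apply, ih]

lemma exists_mem_sdiff_of_ne {I J : Idx n} (h : J ≠ I) :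
    ∃ x, x ∈ I.1 ∧ x ∉ J.1 := by
  by_contra hc
  push_neg at hc
  exact h (Subtype.ext ((Finset.eq_of_subset_of_card_le (fun x hx => hc x hx)
    (by rw [I.2, J.2])).symm))

lemma minorMap_eV (J I : Idx n) : minorMap J (eV I) = if J = I then 1 else 0 := by
  rw [minorMap_apply]
  split_ifs with h
  · subst h
    have : (Matrix.of fun a b : Fin n => eV J a (emb J b)) = (1 : Matrix (Fin n) (Fin n) ℂ) := by
      ext a b
      simp only [Matrix.of_apply, eV, Pi.single_apply, Matrix.one_apply]
      by_cases hab : a = b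
      · subst hab; simp
      · rw [if_neg (fun hh => hab ((emb_injective J hh).symm)), if_neg hab]
    rw [this, Matrix.det_one]
  · obtain ⟨x, hxI, hxJ⟩ := exists_mem_sdiff_of_ne h
    set a : Fin n := (I.1.orderIsoOfFin I.2).symm ⟨x, hxI⟩ with ha
    have hea : emb I a = x := congrArg Subtype.val ((I.1.orderIsoOfFin I.2).apply_symm_apply ⟨x, hxI⟩)
    apply Matrix.det_eq_zero_of_row_eq_zero a
    intro b
    simp only [Matrix.of_apply, eV, Pi.single_apply, hea]
    rw [if_neg]
    intro hh
    exact hxJ (hh ▸ emb_mem J b)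

/-- Two alternating `n`-forms on `ℂ^{2n}` agreeing on increasing tuples of basis vectors agree. -/
lemma alt_ext_mono {F G : (Fin (2 * n) → ℂ) [⋀^Fin n]→ₗ[ℂ] ℂ}
    (h : ∀ J : Idx n, F (eV J) = G (eV J)) : F = G := by
  apply Module.Basis.ext_alternating (Pi.basisFun ℂ (Fin (2 * n)))
  intro v hv
  have hcard : (Finset.univ.image v).card = n := by
    rw [Finset.card_image_of_injective _ hv, Finset.card_univ, Fintype.card_fin]
  set J : Idx n := ⟨Finset.univ.image v, hcard⟩ with hJ
  have hmem : ∀ a, v a ∈ J.1 := fun a => Finset.mem_image_of_mem v (Finset.mem_univ a)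
  set σ0 : Fin n → Fin n := fun a => (J.1.orderIsoOfFin J.2).symm ⟨v a, hmem a⟩ with hσ0
  have hσinj : Function.Injective σ0 := by
    intro a b hab
    rw [hσ0] at hab
    apply hv
    have := congrArg (fun t => ((J.1.orderIsoOfFin J.2) t : Fin (2 * n))) hab
    simpa using this
  let σ : Equiv.Perm (Fin n) := Equiv.ofBijective σ0 (Finite.injective_iff_bijective.mp hσinj)
  have hfac : ∀ a, emb J (σ a) = v a := fun a => by
    show ((J.1.orderIsoOfFin J.2) ((J.1.orderIsoOfFin J.2).symm ⟨v a, hmem a⟩) : Fin (2 * n)) = v a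
    rw [OrderIso.apply_symm_apply]
  have h1 : (fun i => (Pi.basisFun ℂ (Fin (2 * n))) (v i)) = (eV J) ∘ σ := by
    funext a
    simp only [Function.comp_apply, eV, ← hfac a, Pi.basisFun_apply]
  rw [h1, AlternatingMap.map_perm, AlternatingMap.map_perm, h J]

/-- Expansion of an alternating `n`-form in minors. -/
lemma alt_expand (F : (Fin (2 * n) → ℂ) [⋀^Fin n]→ₗ[ℂ] ℂ) (u : Fin n → Fin (2 * n) → ℂ) :
    F u = ∑ J : Idx n, F (eV J) * Matrix.det (Matrix.of fun a b : Fin n => u a (emb J b)) := by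
  have : F = ∑ J : Idx n, F (eV J) • minorMap J := by
    apply alt_ext_mono
    intro L
    rw [altSum_apply]
    simp only [AlternatingMap.smul_apply, minorMap_eV, smul_eq_mul, mul_ite, mul_one, mul_zero]
    simp
  conv_lhs => rw [this]
  rw [altSum_apply]
  simp only [AlternatingMap.smul_apply, smul_eq_mul, minorMap_apply]

/-- Cauchy–Binet for minors. -/
lemma wedgePow_mul (g h : Matrix (Fin (2 * n)) (Fin (2 * n)) ℂ) :
    wedgePow n (g * h) = wedgePow n g * wedgePow n h := by
  ext I K
  set F : (Fin (2 * n) → ℂ) [⋀^Fin n]→ₗ[ℂ] ℂ :=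
    (Matrix.detRowAlternating).compLinearMap ((h.submatrix id (emb K)).vecMulLinear) with hF
  have hFapp : ∀ u : Fin n → Fin (2 * n) → ℂ,
      F u = Matrix.det (Matrix.of fun a b : Fin n => ∑ c, u a c * h c (emb K b)) := by
    intro u
    show Matrix.det (Matrix.of fun a => Matrix.vecMul (u a) (h.submatrix id (emb K))) = _
    exact congrArg Matrix.det (by ext a b; simp [Matrix.vecMul, dotProduct])
  have hFeV : ∀ L : Idx n, F (eV L) = wedgePow n h L K := by
    intro L
    rw [hFapp, wedgePow_apply]
    congr 1
    ext a b
    simp only [Matrix.of_apply, eV]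
    rw [Finset.sum_eq_single (emb L a)]
    · simp
    · intro c _ hc; simp [Pi.single_apply, hc]
    · intro hc; exact absurd (Finset.mem_univ _) hc
  have key := alt_expand F (fun a => g (emb I a))
  rw [hFapp] at key
  have hL : Matrix.det (Matrix.of fun a b : Fin n => ∑ c, g (emb I a) c * h c (emb K b)) =
      wedgePow n (g * h) I K := by
    rw [wedgePow_apply]
    exact congrArg Matrix.det (by ext a b; simp [Matrix.mul_apply])
  rw [hL] at key
  rw [key, Matrix.mul_apply]
  apply Finset.sum_congr rfl
  intro J _
  rw [hFeV J, ← wedgePow_apply, mul_comm]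

lemma wedgePow_one : wedgePow n (1 : Matrix (Fin (2 * n)) (Fin (2 * n)) ℂ) = 1 := by
  ext I J
  have h1 : wedgePow n (1 : Matrix (Fin (2 * n)) (Fin (2 * n)) ℂ) I J = minorMap J (eV I) := by
    rw [wedgePow_apply, minorMap_apply]
    exact congrArg Matrix.det (by
      ext a b
      simp only [Matrix.of_apply, Matrix.one_apply, eV, Pi.single_apply]
      by_cases h : emb I a = emb J b
      · simp [h]
      · rw [if_neg h, if_neg (Ne.symm h)])
  rw [h1, minorMap_eV, Matrix.one_apply]
  by_cases h : I = J
  · subst h; simp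
  · rw [if_neg (Ne.symm h), if_neg h]

lemma wedgePow_transpose (g : Matrix (Fin (2 * n)) (Fin (2 * n)) ℂ) :
    wedgePow n gᵀ = (wedgePow n g)ᵀ := by
  ext I J
  rw [Matrix.transpose_apply, wedgePow_apply, wedgePow_apply, ← Matrix.det_transpose]
  exact congrArg Matrix.det (by ext a b; simp)

lemma wedgePow_smul (c : ℂ) (g : Matrix (Fin (2 * n)) (Fin (2 * n)) ℂ) :
    wedgePow n (c • g) = c ^ n • wedgePow n g := by
  ext I J
  rw [Matrix.smul_apply, wedgePow_apply, wedgePow_apply]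
  have h1 : (Matrix.of fun a b : Fin n => (c • g) (emb I a) (emb J b)) =
      c • (Matrix.of fun a b : Fin n => g (emb I a) (emb J b)) := by
    ext a b; simp
  rw [h1, Matrix.det_smul, Fintype.card_fin, smul_eq_mul]

lemma wedgePow_neg (g : Matrix (Fin (2 * n)) (Fin (2 * n)) ℂ) :
    wedgePow n (-g) = (-1 : ℂ) ^ n • wedgePow n g := by
  rw [← wedgePow_smul, neg_one_smul]

/-- Identification of `Fin n ⊕ Fin n` with `Fin (2n)`. -/
def Esum (n : ℕ) : (Fin n ⊕ Fin n) ≃ Fin (2 * n) := finSumFinEquiv.trans (finCongr (by omega))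

/-- The `2n × 2n` matrix whose first `n` columns are `u` and last `n` columns are `v`. -/
noncomputable def glue (u v : Fin n → Fin (2 * n) → ℂ) : Matrix (Fin (2 * n)) (Fin (2 * n)) ℂ :=
  Matrix.of fun r c => Sum.elim (fun a => u a r) (fun b => v b r) ((Esum n).symm c)

lemma eV_apply (I : Idx n) (a : Fin n) (r : Fin (2 * n)) :
    eV I a r = if r = emb I a then 1 else 0 := by
  simp [eV, Pi.single_apply]

lemma glue_apply_inl (u v : Fin n → Fin (2 * n) → ℂ) (r : Fin (2 * n)) (a : Fin n) :
    glue u v r (Esum n (Sum.inl a)) = u a r := by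
  unfold glue
  rw [Matrix.of_apply, Equiv.symm_apply_apply]
  rfl

lemma glue_apply_inr (u v : Fin n → Fin (2 * n) → ℂ) (r : Fin (2 * n)) (b : Fin n) :
    glue u v r (Esum n (Sum.inr b)) = v b r := by
  unfold glue
  rw [Matrix.of_apply, Equiv.symm_apply_apply]
  rfl

lemma glue_update_left [DecidableEq (Fin n)] (u v : Fin n → Fin (2 * n) → ℂ) (i : Fin n) (x : Fin (2 * n) → ℂ) :
    glue (Function.update u i x) v = (glue u v).updateCol (Esum n (Sum.inl i)) x := by
  ext r c
  rw [Matrix.updateCol_apply]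
  by_cases hc : c = Esum n (Sum.inl i)
  · subst hc
    rw [if_pos rfl]
    show Sum.elim _ _ ((Esum n).symm (Esum n (Sum.inl i))) = x r
    rw [Equiv.symm_apply_apply]
    simp
  · rw [if_neg hc]
    show Sum.elim _ _ ((Esum n).symm c) = Sum.elim _ _ ((Esum n).symm c)
    rcases hs : (Esum n).symm c with a | b
    · have hai : a ≠ i := by
        rintro rfl
        exact hc (by rw [← hs, Equiv.apply_symm_apply])
      simp [Function.update_apply, hai]
    · simp

lemma glue_update_right [DecidableEq (Fin n)] (u v : Fin n → Fin (2 * n) → ℂ) (i : Fin n) (x : Fin (2 * n) → ℂ) :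
    glue u (Function.update v i x) = (glue u v).updateCol (Esum n (Sum.inr i)) x := by
  ext r c
  rw [Matrix.updateCol_apply]
  by_cases hc : c = Esum n (Sum.inr i)
  · subst hc
    rw [if_pos rfl]
    show Sum.elim _ _ ((Esum n).symm (Esum n (Sum.inr i))) = x r
    rw [Equiv.symm_apply_apply]
    simp
  · rw [if_neg hc]
    show Sum.elim _ _ ((Esum n).symm c) = Sum.elim _ _ ((Esum n).symm c)
    rcases hs : (Esum n).symm c with a | b
    · simp
    · have hai : b ≠ i := by
        rintro rfl
        exact hc (by rw [← hs, Equiv.apply_symm_apply])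
      simp [Function.update_apply, hai]

/-- `u ↦ det [u | f]` as an alternating map. -/
noncomputable def glueA (f : Fin n → Fin (2 * n) → ℂ) : (Fin (2 * n) → ℂ) [⋀^Fin n]→ₗ[ℂ] ℂ where
  toFun u := Matrix.det (glue u f)
  map_update_add' u i x y := by
    simp only [glue_update_left]
    exact Matrix.det_updateCol_add (glue u f) (Esum n (Sum.inl i)) x y
  map_update_smul' u i c x := by
    simp only [glue_update_left]
    rw [Matrix.det_updateCol_smul (glue u f) (Esum n (Sum.inl i)) c x, smul_eq_mul]
  map_eq_zero_of_eq' u i j hu hij := by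
    refine Matrix.det_zero_of_column_eq (i := Esum n (Sum.inl i)) (j := Esum n (Sum.inl j))
      (fun h => hij (Sum.inl.inj ((Esum n).injective h))) ?_
    intro k
    rw [glue_apply_inl, glue_apply_inl, hu]

/-- `u ↦ det [f | u]` as an alternating map. -/
noncomputable def glueB (f : Fin n → Fin (2 * n) → ℂ) : (Fin (2 * n) → ℂ) [⋀^Fin n]→ₗ[ℂ] ℂ where
  toFun u := Matrix.det (glue f u)
  map_update_add' u i x y := by
    simp only [glue_update_right]
    exact Matrix.det_updateCol_add (glue f u) (Esum n (Sum.inr i)) x y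
  map_update_smul' u i c x := by
    simp only [glue_update_right]
    rw [Matrix.det_updateCol_smul (glue f u) (Esum n (Sum.inr i)) c x, smul_eq_mul]
  map_eq_zero_of_eq' u i j hu hij := by
    refine Matrix.det_zero_of_column_eq (i := Esum n (Sum.inr i)) (j := Esum n (Sum.inr j))
      (fun h => hij (Sum.inr.inj ((Esum n).injective h))) ?_
    intro k
    rw [glue_apply_inr, glue_apply_inr, hu]

lemma glueA_apply (f u : Fin n → Fin (2 * n) → ℂ) : glueA f u = Matrix.det (glue u f) := rfl

lemma glueB_apply (f u : Fin n → Fin (2 * n) → ℂ) : glueB f u = Matrix.det (glue f u) := rfl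

lemma glue_eV_det_eq_zero {L R : Idx n} (x : Fin (2 * n)) (hxL : x ∈ L.1) (hxR : x ∈ R.1) :
    Matrix.det (glue (eV L) (eV R)) = 0 := by
  set a : Fin n := (L.1.orderIsoOfFin L.2).symm ⟨x, hxL⟩ with ha
  set b : Fin n := (R.1.orderIsoOfFin R.2).symm ⟨x, hxR⟩ with hb
  have hea : emb L a = x := congrArg Subtype.val ((L.1.orderIsoOfFin L.2).apply_symm_apply ⟨x, hxL⟩)
  have heb : emb R b = x := congrArg Subtype.val ((R.1.orderIsoOfFin R.2).apply_symm_apply ⟨x, hxR⟩)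
  refine Matrix.det_zero_of_column_eq (i := Esum n (Sum.inl a)) (j := Esum n (Sum.inr b))
    (fun h => Sum.inl_ne_inr ((Esum n).injective h)) ?_
  intro k
  rw [glue_apply_inl, glue_apply_inr, eV_apply, eV_apply, hea, heb]

/-- The sign `s(I) = det [e_I | e_{Iᶜ}]`. -/
noncomputable def sgn (I : Idx n) : ℂ := Matrix.det (glue (eV I) (eV (complIdx n I)))

lemma compl_compl_idx (I : Idx n) : complIdx n (complIdx n I) = I := by
  apply Subtype.ext
  exact compl_compl _

lemma mul_glue (g : Matrix (Fin (2 * n)) (Fin (2 * n)) ℂ) (u v : Fin n → Fin (2 * n) → ℂ) :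
    g * glue u v = glue (fun a => g.mulVec (u a)) (fun b => g.mulVec (v b)) := by
  ext r c
  rw [Matrix.mul_apply]
  show _ = Sum.elim _ _ ((Esum n).symm c)
  rcases hs : (Esum n).symm c with a | b <;>
    simp [glue, hs, Matrix.mulVec, dotProduct]

/-- Jacobi's identity on complementary minors. -/
lemma jac (g : Matrix (Fin (2 * n)) (Fin (2 * n)) ℂ) (hg : IsUnit g.det) (I K : Idx n) :
    g.det * (sgn I * wedgePow n g⁻¹ I K) =
      sgn K * wedgePow n g (complIdx n K) (complIdx n I) := by
  classical
  set hcol : Fin n → Fin (2 * n) → ℂ := fun a r => g⁻¹ r (emb K a) with hh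
  set gcol : Fin n → Fin (2 * n) → ℂ := fun b r => g r (emb (complIdx n I) b) with hgc
  have step : g.det * Matrix.det (glue hcol (eV (complIdx n I))) =
      Matrix.det (glue (eV K) gcol) := by
    rw [← Matrix.det_mul, mul_glue]
    have h1 : (fun a => g.mulVec (hcol a)) = eV K := by
      funext a
      funext r
      rw [eV_apply]
      have h2 : g.mulVec (hcol a) r = (g * g⁻¹) r (emb K a) := by
        simp [Matrix.mulVec, dotProduct, Matrix.mul_apply, hh]
      show g.mulVec (hcol a) r = _
      rw [h2, Matrix.mul_nonsing_inv g hg, Matrix.one_apply]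
    have h2 : (fun b => g.mulVec (eV (complIdx n I) b)) = gcol := by
      funext b
      funext r
      show g.mulVec (eV (complIdx n I) b) r = g r (emb (complIdx n I) b)
      simp only [Matrix.mulVec, dotProduct, eV]

      rw [Finset.sum_eq_single (emb (complIdx n I) b)]
      · simp
      · intro c _ hc; simp [Pi.single_apply, hc]
      · intro hc; exact absurd (Finset.mem_univ _) hc
    rw [h1, h2]
  have lhs_exp : Matrix.det (glue hcol (eV (complIdx n I))) = sgn I * wedgePow n g⁻¹ I K := by
    rw [← glueA_apply, alt_expand]
    rw [Finset.sum_eq_single I]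
    · rw [glueA_apply, ← sgn]
      congr 1
      rw [wedgePow_apply, ← Matrix.det_transpose]
      exact congrArg Matrix.det (by ext a b; simp [hh])
    · intro J _ hJ
      obtain ⟨x, hxJ, hxI⟩ := exists_mem_sdiff_of_ne (show I ≠ J from hJ.symm)
      rw [glueA_apply, glue_eV_det_eq_zero x hxJ (Finset.mem_compl.mpr hxI), zero_mul]
    · intro hc; exact absurd (Finset.mem_univ _) hc
  have rhs_exp : Matrix.det (glue (eV K) gcol) =
      sgn K * wedgePow n g (complIdx n K) (complIdx n I) := by
    rw [← glueB_apply, alt_expand]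
    rw [Finset.sum_eq_single (complIdx n K)]
    · rw [glueB_apply, ← sgn]
      congr 1
      rw [wedgePow_apply, ← Matrix.det_transpose]
      exact congrArg Matrix.det (by ext a b; simp [hgc])
    · intro J _ hJ
      have hx : ∃ x, x ∈ K.1 ∧ x ∈ J.1 := by
        by_contra hc
        push_neg at hc
        apply hJ
        apply Subtype.ext
        apply Finset.eq_of_subset_of_card_le
        · intro x hx
          simp only [complIdx, Finset.mem_compl]
          intro hxK
          exact hc x hxK hx
        · rw [J.2, (complIdx n K).2]
      obtain ⟨x, hxK, hxJ⟩ := hx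
      rw [glueB_apply, glue_eV_det_eq_zero x hxK hxJ, zero_mul]
    · intro hc; exact absurd (Finset.mem_univ _) hc
  rw [lhs_exp] at step
  rw [step, rhs_exp]

/-! ### Sign combinatorics -/

lemma Esum_inl_val (a : Fin n) : ((Esum n (Sum.inl a) : Fin (2 * n)) : ℕ) = (a : ℕ) := by
  simp [Esum]

lemma Esum_inr_val (b : Fin n) : ((Esum n (Sum.inr b) : Fin (2 * n)) : ℕ) = n + (b : ℕ) := by
  simp [Esum]
  omega

lemma mem_compl_iff (I : Idx n) (x : Fin (2 * n)) : x ∈ (complIdx n I).1 ↔ x ∉ I.1 :=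
  Finset.mem_compl

/-- The permutation of `Fin (2n)` sending the first `n` positions to `I` (increasingly) and
the last `n` positions to `Iᶜ` (increasingly). -/
noncomputable def permOf (I : Idx n) : Equiv.Perm (Fin (2 * n)) :=
  Equiv.ofBijective (fun c => Sum.elim (emb I) (emb (complIdx n I)) ((Esum n).symm c))
    (by
      rw [Finite.injective_iff_bijective.symm]
      intro c1 c2 h
      have h2 : Sum.elim (emb I) (emb (complIdx n I)) ((Esum n).symm c1) =
          Sum.elim (emb I) (emb (complIdx n I)) ((Esum n).symm c2) := h
      have key : (Esum n).symm c1 = (Esum n).symm c2 := by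
        rcases h1 : (Esum n).symm c1 with a1 | b1 <;> rcases hb : (Esum n).symm c2 with a2 | b2 <;>
          rw [h1, hb] at h2 <;> simp only [Sum.elim_inl, Sum.elim_inr] at h2
        · rw [emb_injective I h2]
        · exact absurd ((mem_compl_iff I _).mp (h2 ▸ emb_mem (complIdx n I) b2))
            (fun hc => hc (emb_mem I a1))
        · exact absurd ((mem_compl_iff I _).mp (emb_mem (complIdx n I) b1))
            (fun hc => hc (h2 ▸ emb_mem I a2))
        · rw [emb_injective (complIdx n I) h2]
      calc c1 = Esum n ((Esum n).symm c1) := ((Esum n).apply_symm_apply c1).symm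
        _ = Esum n ((Esum n).symm c2) := by rw [key]
        _ = c2 := (Esum n).apply_symm_apply c2)

lemma permOf_apply (I : Idx n) (c : Fin (2 * n)) :
    permOf I c = Sum.elim (emb I) (emb (complIdx n I)) ((Esum n).symm c) := rfl

lemma permOf_inl (I : Idx n) (a : Fin n) : permOf I (Esum n (Sum.inl a)) = emb I a := by
  rw [permOf_apply, Equiv.symm_apply_apply]
  rfl

lemma permOf_inr (I : Idx n) (b : Fin n) :
    permOf I (Esum n (Sum.inr b)) = emb (complIdx n I) b := by
  rw [permOf_apply, Equiv.symm_apply_apply]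
  rfl

lemma sgn_eq_sign (I : Idx n) : sgn I = ((Equiv.Perm.sign (permOf I) : ℤ) : ℂ) := by
  unfold sgn
  have hM : glue (eV I) (eV (complIdx n I)) = ((permOf I).permMatrix ℂ)ᵀ := by
    ext r c
    rw [Matrix.transpose_apply]
    have hperm : (permOf I).permMatrix ℂ c r = if r = permOf I c then 1 else 0 := by
      simp [Equiv.Perm.permMatrix, PEquiv.toMatrix_apply, Equiv.toPEquiv_apply, Option.mem_def,
        eq_comm]
    rw [hperm]
    rcases hs : (Esum n).symm c with a | b
    · have hc : c = Esum n (Sum.inl a) := by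
        rw [← hs, Equiv.apply_symm_apply]
      subst hc
      rw [glue_apply_inl, eV_apply, permOf_inl]
    · have hc : c = Esum n (Sum.inr b) := by
        rw [← hs, Equiv.apply_symm_apply]
      subst hc
      rw [glue_apply_inr, eV_apply, permOf_inr]
  rw [hM, Matrix.det_transpose, Matrix.det_permutation]

lemma sign_eq_signAux' {m : ℕ} (hm : 2 ≤ m) (σ : Equiv.Perm (Fin m)) :
    Equiv.Perm.sign σ = Equiv.Perm.signAux σ := by
  have hsurj : Function.Surjective
      (MonoidHom.mk' (Equiv.Perm.signAux (n := m)) Equiv.Perm.signAux_mul) := by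
    intro u
    rcases Int.units_eq_one_or u with rfl | rfl
    · exact ⟨1, Equiv.Perm.signAux_one m⟩
    · refine ⟨Equiv.swap ⟨0, by omega⟩ ⟨1, by omega⟩, Equiv.Perm.signAux_swap ?_⟩
      simp [Fin.ext_iff]
  rw [← Equiv.Perm.eq_sign_of_surjective_hom hsurj]
  rfl

lemma qCoeff_compl (I : Idx n) :
    qCoeff n I (complIdx n I) =
      (-1 : ℂ) ^ ((I.1 ×ˢ I.1ᶜ).filter fun p => p.2 < p.1).card := by
  unfold qCoeff
  rw [if_pos (show ((complIdx n I : Idx n) : Finset (Fin (2 * n))) = (I : Finset (Fin (2 * n)))ᶜ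
    from rfl)]
  rfl

lemma qCoeff_compl' (K : Idx n) :
    qCoeff n (complIdx n K) K =
      (-1 : ℂ) ^ (((K.1ᶜ) ×ˢ K.1).filter fun p => p.2 < p.1).card := by
  unfold qCoeff
  have hc : (K : Finset (Fin (2 * n))) =
      ((complIdx n K : Idx n) : Finset (Fin (2 * n)))ᶜ := (compl_compl _).symm
  rw [if_pos hc]
  rfl

/-- The inversion-count description of `sgn`. -/
lemma sgn_eq_qCoeff (hn : 1 ≤ n) (I : Idx n) : sgn I = qCoeff n I (complIdx n I) := by
  rw [sgn_eq_sign, qCoeff_compl, sign_eq_signAux' (by omega) (permOf I)]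
  unfold Equiv.Perm.signAux
  rw [Finset.prod_ite _ _, Finset.prod_const, Finset.prod_const, one_pow, mul_one]
  have hcard : ((Equiv.Perm.finPairsLT (2 * n)).filter
        fun x => permOf I x.1 ≤ permOf I x.2).card
      = ((I.1 ×ˢ I.1ᶜ).filter fun p => p.2 < p.1).card := by
    apply Finset.card_bij (i := fun x _ => (permOf I x.2, permOf I x.1))
    · rintro ⟨x1, x2⟩ hx
      rw [Finset.mem_filter] at hx
      obtain ⟨hmem, hcond⟩ := hx
      have hlt : x2 < x1 := Equiv.Perm.mem_finPairsLT.mp hmem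
      rcases h1 : (Esum n).symm x1 with a1 | b1 <;> rcases h2 : (Esum n).symm x2 with a2 | b2 <;>
        (try exact ?_)
      · -- both in first block: impossible
        exfalso
        have hx1 : x1 = Esum n (Sum.inl a1) := by rw [← h1, Equiv.apply_symm_apply]
        have hx2 : x2 = Esum n (Sum.inl a2) := by rw [← h2, Equiv.apply_symm_apply]
        have hv : (a2 : ℕ) < (a1 : ℕ) := by
          have := hlt
          rw [hx1, hx2, Fin.lt_def, Esum_inl_val, Esum_inl_val] at this
          exact this
        have := emb_strictMono I (show a2 < a1 from hv)
        rw [hx1, hx2, permOf_inl, permOf_inl] at hcond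
        exact absurd hcond (not_le.mpr this)
      · -- x1 first block, x2 second: impossible since x2 < x1
        exfalso
        have hx1 : x1 = Esum n (Sum.inl a1) := by rw [← h1, Equiv.apply_symm_apply]
        have hx2 : x2 = Esum n (Sum.inr b2) := by rw [← h2, Equiv.apply_symm_apply]
        have := hlt
        rw [hx1, hx2, Fin.lt_def, Esum_inl_val, Esum_inr_val] at this
        omega
      · -- the good case
        have hx1 : x1 = Esum n (Sum.inr b1) := by rw [← h1, Equiv.apply_symm_apply]
        have hx2 : x2 = Esum n (Sum.inl a2) := by rw [← h2, Equiv.apply_symm_apply]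
        rw [Finset.mem_filter, Finset.mem_product]
        rw [hx1, hx2, permOf_inr, permOf_inl] at hcond ⊢
        refine ⟨⟨emb_mem I a2,
          Finset.mem_compl.mpr ((mem_compl_iff I _).mp (emb_mem (complIdx n I) b1))⟩, ?_⟩
        have hne : emb (complIdx n I) b1 ≠ emb I a2 := by
          intro h
          exact ((mem_compl_iff I _).mp (emb_mem (complIdx n I) b1)) (h ▸ emb_mem I a2)
        exact lt_of_le_of_ne hcond hne
      · -- both in second block: impossible
        exfalso
        have hx1 : x1 = Esum n (Sum.inr b1) := by rw [← h1, Equiv.apply_symm_apply]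
        have hx2 : x2 = Esum n (Sum.inr b2) := by rw [← h2, Equiv.apply_symm_apply]
        have hv : (b2 : ℕ) < (b1 : ℕ) := by
          have := hlt
          rw [hx1, hx2, Fin.lt_def, Esum_inr_val, Esum_inr_val] at this
          omega
        have := emb_strictMono (complIdx n I) (show b2 < b1 from hv)
        rw [hx1, hx2, permOf_inr, permOf_inr] at hcond
        exact absurd hcond (not_le.mpr this)
    · rintro ⟨x1, x2⟩ hx ⟨y1, y2⟩ hy h
      rw [Prod.mk.injEq] at h
      have e2 : x2 = y2 := (permOf I).injective h.1
      have e1 : x1 = y1 := (permOf I).injective h.2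
      subst e1; subst e2; rfl
    · rintro ⟨i, j⟩ hij
      rw [Finset.mem_filter, Finset.mem_product] at hij
      obtain ⟨⟨hiI, hjI⟩, hlt⟩ := hij
      set a : Fin n := (I.1.orderIsoOfFin I.2).symm ⟨i, hiI⟩ with ha
      have hjC : j ∈ (complIdx n I).1 := (mem_compl_iff I j).mpr (Finset.mem_compl.mp hjI)
      set b : Fin n := ((complIdx n I).1.orderIsoOfFin (complIdx n I).2).symm ⟨j, hjC⟩ with hb
      have hea : emb I a = i :=
        congrArg Subtype.val ((I.1.orderIsoOfFin I.2).apply_symm_apply ⟨i, hiI⟩)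
      have heb : emb (complIdx n I) b = j :=
        congrArg Subtype.val
          (((complIdx n I).1.orderIsoOfFin (complIdx n I).2).apply_symm_apply ⟨j, hjC⟩)
      refine ⟨⟨Esum n (Sum.inr b), Esum n (Sum.inl a)⟩, ?_, ?_⟩
      · rw [Finset.mem_filter]
        constructor
        · rw [Equiv.Perm.mem_finPairsLT, Fin.lt_def, Esum_inl_val, Esum_inr_val]
          omega
        · rw [permOf_inr, permOf_inl, hea, heb]
          exact le_of_lt hlt
      · rw [permOf_inr, permOf_inl, hea, heb]
  rw [hcard]
  rw [Units.val_pow_eq_pow_val]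
  norm_num

lemma neg_one_pow_sq : ((-1 : ℂ)) ^ (n * n) = (-1 : ℂ) ^ n := by
  rcases Nat.even_or_odd n with h | h
  · rw [(h.mul_left n).neg_one_pow, h.neg_one_pow]
  · rw [(h.mul h).neg_one_pow, h.neg_one_pow]

lemma inv_card_add (I : Idx n) :
    (((I.1) ×ˢ I.1ᶜ).filter fun p => p.2 < p.1).card
      + (((I.1ᶜ) ×ˢ I.1).filter fun p => p.2 < p.1).card = n * n := by
  have h1 : (((I.1ᶜ) ×ˢ I.1).filter fun p => p.2 < p.1).card
      = (((I.1) ×ˢ I.1ᶜ).filter fun p => p.1 < p.2).card := by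
    apply Finset.card_bij (i := fun p _ => Prod.swap p)
    · rintro ⟨x, y⟩ h
      rw [Finset.mem_filter, Finset.mem_product] at h ⊢
      exact ⟨⟨h.1.2, h.1.1⟩, h.2⟩
    · rintro ⟨x1, y1⟩ _ ⟨x2, y2⟩ _ h
      simpa [Prod.ext_iff, and_comm] using h
    · rintro ⟨x, y⟩ h
      rw [Finset.mem_filter, Finset.mem_product] at h
      refine ⟨(y, x), ?_, rfl⟩
      rw [Finset.mem_filter, Finset.mem_product]
      exact ⟨⟨h.1.2, h.1.1⟩, h.2⟩
  rw [h1]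
  have h2 : (((I.1) ×ˢ I.1ᶜ).filter fun p => p.1 < p.2)
      = ((I.1) ×ˢ I.1ᶜ).filter fun p => ¬ p.2 < p.1 := by
    apply Finset.filter_congr
    rintro ⟨x, y⟩ hp
    rw [Finset.mem_product] at hp
    have hne : x ≠ y := fun h => (Finset.mem_compl.mp hp.2) (h ▸ hp.1)
    simp only [decide_eq_true_eq]
    constructor
    · exact fun h => not_lt.mpr (le_of_lt h)
    · exact fun h => lt_of_le_of_ne (not_lt.mp h) hne
  rw [h2, Finset.card_filter_add_card_filter_not, Finset.card_product, I.2,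
    Finset.card_compl, I.2, Fintype.card_fin]
  congr 1
  omega

lemma q_mul_q (K : Idx n) :
    qCoeff n K (complIdx n K) * qCoeff n (complIdx n K) K = (-1 : ℂ) ^ n := by
  rw [qCoeff_compl, qCoeff_compl', ← pow_add, inv_card_add K, neg_one_pow_sq]

/-! ### Smat lemmas -/

lemma mul_Smat_apply (M : Matrix (Idx n) (Idx n) ℂ) (I K : Idx n) :
    (M * Smat n) I K = M I (complIdx n K) * qCoeff n (complIdx n K) K := by
  rw [Matrix.mul_apply, Finset.sum_eq_single (complIdx n K)]
  · unfold Smat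
    rw [if_pos rfl]
  · intro L _ hL
    unfold Smat
    rw [if_neg hL, mul_zero]
  · intro h; exact absurd (Finset.mem_univ _) h

lemma Smat_mul_apply (M : Matrix (Idx n) (Idx n) ℂ) (I K : Idx n) :
    (Smat n * M) I K = qCoeff n I (complIdx n I) * M (complIdx n I) K := by
  rw [Matrix.mul_apply, Finset.sum_eq_single (complIdx n I)]
  · unfold Smat
    rw [if_pos (compl_compl_idx I).symm, compl_compl_idx]
  · intro L _ hL
    unfold Smat
    rw [if_neg, zero_mul]
    intro h
    apply hL
    rw [h, compl_compl_idx]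
  · intro h; exact absurd (Finset.mem_univ _) h

/-- The key conjugation identity: `S Λ(x) S = (-1)^n det x • Λ((xᵀ)⁻¹)`. -/
lemma Smat_conj (hn : 1 ≤ n) (x : Matrix (Fin (2 * n)) (Fin (2 * n)) ℂ) (hx : IsUnit x.det) :
    Smat n * wedgePow n x * Smat n = ((-1 : ℂ) ^ n * x.det) • wedgePow n (xᵀ)⁻¹ := by
  ext I K
  rw [mul_Smat_apply, Smat_mul_apply, Matrix.smul_apply, smul_eq_mul]
  have ht : wedgePow n (xᵀ)⁻¹ I K = wedgePow n x⁻¹ K I := by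
    rw [← Matrix.transpose_nonsing_inv, wedgePow_transpose, Matrix.transpose_apply]
  rw [ht]
  have hj := jac x hx K I
  calc qCoeff n I (complIdx n I) * wedgePow n x (complIdx n I) (complIdx n K)
        * qCoeff n (complIdx n K) K
      = (sgn I * wedgePow n x (complIdx n I) (complIdx n K)) * qCoeff n (complIdx n K) K := by
        rw [sgn_eq_qCoeff hn I]
    _ = (x.det * (sgn K * wedgePow n x⁻¹ K I)) * qCoeff n (complIdx n K) K := by rw [hj]
    _ = (x.det * wedgePow n x⁻¹ K I) *
        (qCoeff n K (complIdx n K) * qCoeff n (complIdx n K) K) := by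
        rw [← sgn_eq_qCoeff hn K]; ring
    _ = (-1 : ℂ) ^ n * x.det * wedgePow n x⁻¹ K I := by
        rw [q_mul_q K]; ring

/-! ### JMat facts -/

lemma wn_mul_wn (hn : 1 ≤ n) : wnMat n * wnMat n = 1 := by
  ext i j
  rw [Matrix.mul_apply, Matrix.one_apply, Finset.sum_eq_single (⟨n - 1 - (i : ℕ), by omega⟩ : Fin n)]
  · unfold wnMat
    have h1 : (i : ℕ) + (n - 1 - (i : ℕ)) + 1 = n := by
      have := i.isLt; omega
    rw [if_pos h1]
    by_cases h : i = j
    · subst h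
      rw [if_pos (by have := i.isLt; simp; omega), if_pos rfl, one_mul]
    · rw [if_neg, if_neg h, one_mul]
      have hne : (i : ℕ) ≠ (j : ℕ) := fun hc => h (Fin.ext hc)
      simp only []
      intro hc
      apply hne
      have := j.isLt
      omega
  · intro k _ hk
    unfold wnMat
    rw [if_neg, zero_mul]
    intro hc
    apply hk
    apply Fin.ext
    simp only []
    omega
  · intro h; exact absurd (Finset.mem_univ _) h

lemma wn_transpose : (wnMat n)ᵀ = wnMat n := by
  ext i j
  rw [Matrix.transpose_apply]
  unfold wnMat
  by_cases h : (i : ℕ) + (j : ℕ) + 1 = n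
  · rw [if_pos (by omega), if_pos h]
  · rw [if_neg (by omega), if_neg h]

lemma JMat_eq : JMat n = Matrix.reindex (Esum n) (Esum n)
    (Matrix.fromBlocks 0 (wnMat n) (-(wnMat n)) 0) := rfl

lemma JMat_mul_JMat (hn : 1 ≤ n) : JMat n * JMat n = -1 := by
  rw [JMat_eq, Matrix.reindex_apply, Matrix.submatrix_mul_equiv,
    Matrix.fromBlocks_multiply]
  have h : Matrix.fromBlocks
      (0 * 0 + wnMat n * -wnMat n) (0 * wnMat n + wnMat n * 0)
      (-wnMat n * 0 + 0 * -wnMat n) (-wnMat n * wnMat n + 0 * 0) = (-1 : Matrix _ _ ℂ) := by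
    have h1 : -(Matrix.fromBlocks (1 : Matrix (Fin n) (Fin n) ℂ) 0 0 1) =
        Matrix.fromBlocks (-1) (-0) (-0) (-1) := Matrix.fromBlocks_neg (1 : Matrix (Fin n) (Fin n) ℂ) (0 : Matrix (Fin n) (Fin n) ℂ)
        (0 : Matrix (Fin n) (Fin n) ℂ) (1 : Matrix (Fin n) (Fin n) ℂ)
    rw [Matrix.fromBlocks_one] at h1
    simp only [Matrix.mul_neg, Matrix.neg_mul, Matrix.mul_zero, Matrix.zero_mul,
      wn_mul_wn hn, add_zero, zero_add, neg_zero] at h1 ⊢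
    rw [h1]
  rw [h]
  have : (-1 : Matrix (Fin n ⊕ Fin n) (Fin n ⊕ Fin n) ℂ).submatrix
      (Esum n).symm (Esum n).symm = -((1 : Matrix _ _ ℂ).submatrix (Esum n).symm (Esum n).symm) := rfl
  rw [this, Matrix.submatrix_one_equiv]

lemma JMat_transpose : (JMat n)ᵀ = -(JMat n) := by
  rw [JMat_eq, Matrix.reindex_apply, Matrix.transpose_submatrix, Matrix.fromBlocks_transpose]
  rw [wn_transpose, Matrix.transpose_neg, wn_transpose, Matrix.transpose_zero]
  have h1 : -(Matrix.fromBlocks 0 (wnMat n) (-(wnMat n)) 0) =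
      Matrix.fromBlocks (-0) (-(wnMat n)) (-(-(wnMat n))) (-0) :=
    Matrix.fromBlocks_neg 0 (wnMat n) (-(wnMat n)) 0
  rw [neg_neg, neg_zero] at h1
  rw [← h1]
  rfl

lemma det_JMat (hn : 1 ≤ n) : (JMat n).det = 1 := by
  rw [JMat_eq, Matrix.det_reindex_self]
  have hfac : (Matrix.fromBlocks 0 (wnMat n) (-(wnMat n)) 0) =
      Matrix.fromBlocks (wnMat n) 0 0 1 *
        (Matrix.fromBlocks 1 0 0 (-(wnMat n)) * Matrix.fromBlocks 0 1 1 0) := by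
    rw [Matrix.fromBlocks_multiply, Matrix.fromBlocks_multiply]
    simp
  rw [hfac, Matrix.det_mul, Matrix.det_mul]
  rw [Matrix.det_fromBlocks_zero₂₁, Matrix.det_fromBlocks_zero₂₁]
  have hswap : Matrix.det (Matrix.fromBlocks 0 1 1 0 : Matrix (Fin n ⊕ Fin n) (Fin n ⊕ Fin n) ℂ)
      = (-1 : ℂ) ^ n := by
    have h1 : (Matrix.fromBlocks 1 1 0 1 : Matrix (Fin n ⊕ Fin n) (Fin n ⊕ Fin n) ℂ) *
        Matrix.fromBlocks 0 1 1 0 = Matrix.fromBlocks 1 1 1 0 := by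
      rw [Matrix.fromBlocks_multiply]
      simp
    have h2 := congrArg Matrix.det h1
    simp only [Matrix.det_mul, Matrix.det_fromBlocks_zero₂₁, Matrix.det_one, one_mul,
      Matrix.det_fromBlocks_one₁₁] at h2
    rw [h2]
    simp [Matrix.det_neg]
  rw [hswap]
  simp only [Matrix.det_one, one_mul, mul_one]
  rw [Matrix.det_neg, Fintype.card_fin]
  have hww : (wnMat n).det * (wnMat n).det = 1 := by
    rw [← Matrix.det_mul, wn_mul_wn hn, Matrix.det_one]
  have hpow : ((-1 : ℂ) ^ n) * ((-1 : ℂ) ^ n) = 1 := by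
    rw [← pow_add]
    exact Even.neg_one_pow ⟨n, rfl⟩
  linear_combination ((-1 : ℂ) ^ n * (-1 : ℂ) ^ n) * hww + hpow

end AmatAux

/-- For every invertible `2n × 2n` complex matrix `g`,
`A ∘ ⋀ⁿ(g) ∘ A = det(g) · ⋀ⁿ(J_{2n} · (gᵀ)⁻¹ · J_{2n}⁻¹)` (note `A⁻¹ = A`). -/
theorem Amat_conj_wedgePow (n : ℕ) (hn : 1 ≤ n)
    (g : Matrix (Fin (2 * n)) (Fin (2 * n)) ℂ) (hg : IsUnit g.det) :
    Amat n * wedgePow n g * Amat n =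
      g.det • wedgePow n (JMat n * (gᵀ)⁻¹ * (JMat n)⁻¹) := by
  open AmatAux in
  have hJJ : JMat n * JMat n = -1 := JMat_mul_JMat hn
  have hdetJ : (JMat n).det = 1 := det_JMat hn
  have hJt : (JMat n)ᵀ = -(JMat n) := JMat_transpose
  have hJinv : (JMat n)⁻¹ = -(JMat n) :=
    Matrix.inv_eq_right_inv (by rw [Matrix.mul_neg, hJJ, neg_neg])
  have hJtinv : ((JMat n)ᵀ)⁻¹ = JMat n :=
    Matrix.inv_eq_right_inv (by rw [hJt, Matrix.neg_mul, hJJ, neg_neg])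
  have hdet_mg : IsUnit (JMat n * g).det := by
    rw [Matrix.det_mul, hdetJ, one_mul]; exact hg
  have hkey := Smat_conj hn (JMat n * g) hdet_mg
  have htr : ((JMat n * g)ᵀ)⁻¹ = JMat n * (gᵀ)⁻¹ := by
    rw [Matrix.transpose_mul, Matrix.mul_inv_rev, hJtinv]
  have hL : Amat n * wedgePow n g * Amat n =
      (Smat n * wedgePow n (JMat n * g) * Smat n) * wedgePow n (JMat n) := by
    unfold Amat
    rw [wedgePow_mul (JMat n) g]
    simp only [Matrix.mul_assoc]
  rw [hL, hkey, htr, Matrix.smul_mul, ← wedgePow_mul]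
  rw [hJinv, Matrix.mul_neg, wedgePow_neg, Matrix.det_mul, hdetJ, one_mul]
  rw [smul_smul]
  congr 1
  ring
end

section
/- Let R be a commutative ring, x ∈ R, S an m×m matrix and T a p×p matrix over R. Then det(1 − x · ((S ⊕ (−S)) ⊗ (T ⊕ (−T)))) = det(1 − x² · (S² ⊗ T²))², where M ⊕ N denotes the block-diagonal matrix with blocks M and N, ⊗ denotes the Kronecker product, and 1 denotes the identity matrix of the appropriate size. -/
open Matrix Kronecker

private lemma kron_neg_right {R α γ : Type*} [CommRing R] (S : Matrix α α R) (T : Matrix γ γ R) :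
    (S ⊗ₖ (-T)) = -(S ⊗ₖ T) := by
  ext ⟨i, k⟩ ⟨j, l⟩; simp [mul_neg]

private lemma kron_neg_left {R α γ : Type*} [CommRing R] (S : Matrix α α R) (T : Matrix γ γ R) :
    ((-S) ⊗ₖ T) = -(S ⊗ₖ T) := by
  ext ⟨i, k⟩ ⟨j, l⟩; simp [neg_mul]

private lemma fromBlocks_kron {R α α' γ : Type*} [CommRing R]
    (S₁ : Matrix α α R) (S₂ : Matrix α' α' R) (B : Matrix γ γ R) :
    (Matrix.fromBlocks S₁ 0 0 S₂ ⊗ₖ B) =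
      (Matrix.fromBlocks (S₁ ⊗ₖ B) 0 0 (S₂ ⊗ₖ B)).submatrix
        (Equiv.sumProdDistrib α α' γ) (Equiv.sumProdDistrib α α' γ) := by
  ext ⟨i|i, k⟩ ⟨j|j, l⟩ <;>
    simp [kroneckerMap_apply, Equiv.sumProdDistrib]

private lemma kron_fromBlocks {R α γ γ' : Type*} [CommRing R]
    (S : Matrix α α R) (B₁ : Matrix γ γ R) (B₂ : Matrix γ' γ' R) :
    (S ⊗ₖ Matrix.fromBlocks B₁ 0 0 B₂) =
      (Matrix.fromBlocks (S ⊗ₖ B₁) 0 0 (S ⊗ₖ B₂)).submatrix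
        (Equiv.prodSumDistrib α γ γ') (Equiv.prodSumDistrib α γ γ') := by
  ext ⟨i, k|k⟩ ⟨j, l|l⟩ <;>
    simp [kroneckerMap_apply, Equiv.prodSumDistrib]

private lemma det_one_sub_submatrix {R n o : Type*} [CommRing R] [Fintype n] [Fintype o]
    [DecidableEq n] [DecidableEq o] (x : R) (M : Matrix n n R) (e : o ≃ n) :
    (1 - x • M.submatrix e e).det = (1 - x • M).det := by
  rw [show (1 : Matrix o o R) - x • M.submatrix e e = (1 - x • M).submatrix e e by
    ext i j; by_cases h : i = j <;> simp [Matrix.one_apply, h, e.injective.eq_iff],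
    det_submatrix_equiv_self]

private lemma det_one_sub_fromBlocks {R α α' : Type*} [CommRing R] [Fintype α] [Fintype α']
    [DecidableEq α] [DecidableEq α'] (x : R) (M : Matrix α α R) (N : Matrix α' α' R) :
    (1 - x • Matrix.fromBlocks M 0 0 N).det = (1 - x • M).det * (1 - x • N).det := by
  rw [show (1 : Matrix (α ⊕ α') (α ⊕ α') R) - x • Matrix.fromBlocks M 0 0 N
      = Matrix.fromBlocks (1 - x • M) 0 0 (1 - x • N) by
    ext (i|i) (j|j) <;> simp [Matrix.one_apply],
    det_fromBlocks_zero₂₁]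

/-- For a commutative ring `R`, `x ∈ R`, an `m × m` matrix `S` and a `p × p` matrix `T`:
`det(1 - x·((S ⊕ (-S)) ⊗ (T ⊕ (-T)))) = det(1 - x²·(S² ⊗ T²))²`,
where `⊕` is the block-diagonal sum and `⊗` the Kronecker product. -/
theorem det_one_sub_smul_kronecker_plusMinus {R : Type*} [CommRing R] (x : R)
    {m p : ℕ} (S : Matrix (Fin m) (Fin m) R) (T : Matrix (Fin p) (Fin p) R) :
    (1 - x • (Matrix.fromBlocks S 0 0 (-S) ⊗ₖ Matrix.fromBlocks T 0 0 (-T))).det =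
      (1 - x ^ 2 • ((S * S) ⊗ₖ (T * T))).det ^ 2 := by
  rw [fromBlocks_kron, det_one_sub_submatrix, det_one_sub_fromBlocks,
    kron_fromBlocks, kron_fromBlocks, det_one_sub_submatrix, det_one_sub_submatrix,
    det_one_sub_fromBlocks, det_one_sub_fromBlocks,
    kron_neg_right, kron_neg_left, kron_neg_left, kron_neg_right, neg_neg,
    smul_neg, sub_neg_eq_add]
  have key : (1 - x • S ⊗ₖ T).det * (1 + x • S ⊗ₖ T).det
      = (1 - x ^ 2 • (S * S) ⊗ₖ (T * T)).det := by
    rw [← det_mul, sub_mul, one_mul, mul_add, mul_one, smul_mul_assoc, mul_smul_comm,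
      ← mul_kronecker_mul, smul_smul, ← sq]
    congr 1; abel
  rw [← key]; ring
end

section
/- Let E be a field, σ a field automorphism of E, n an odd natural number, and let J, g be invertible n×n matrices over E. Suppose λ ∈ E^× satisfies σ(λ) = λ and (σ(g))ᵀ · J · g = λ · J, where σ(g) denotes entrywise application of σ. Then there exists z ∈ E^× with z · σ(z) = λ, and consequently u := z⁻¹ · g satisfies (σ(u))ᵀ · J · u = J; i.e., every unitary similitude g factors as a scalar times a unitary element. -/
open Matrix

/-- Let `E` be a field with a field automorphism `σ`, `n` odd, and `J, g` invertible `n × n`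
matrices over `E`. If `λ ∈ E^×` satisfies `σ(λ) = λ` and `(σ(g))ᵀ · J · g = λ · J`, then
there is `z ∈ E^×` with `z · σ(z) = λ`, and `u = z⁻¹ · g` satisfies `(σ(u))ᵀ · J · u = J`:
every unitary similitude factors as a scalar times a unitary element. -/
theorem unitary_similitude_factors {E : Type*} [Field E] (σ : E ≃+* E)
    (n : ℕ) (hn : Odd n)
    (J g : Matrix (Fin n) (Fin n) E) (hJ : IsUnit J.det) (hg : IsUnit g.det)
    (lam : E) (hlam : lam ≠ 0) (hfix : σ lam = lam)
    (hsim : (g.map σ)ᵀ * J * g = lam • J) :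
    ∃ z : E, z ≠ 0 ∧ z * σ z = lam ∧
      ((z⁻¹ • g).map σ)ᵀ * J * (z⁻¹ • g) = J := by
  obtain ⟨k, hk⟩ := hn
  set d := g.det with hd
  have hdm : (g.map σ).det = σ d := ((σ : E →+* E).map_det g).symm
  have hdet : σ d * J.det * d = lam ^ n * J.det := by
    have := congrArg Matrix.det hsim
    simpa [Matrix.det_mul, Matrix.det_transpose, Matrix.det_smul, hdm,
      Fintype.card_fin] using this
  have hJ0 : J.det ≠ 0 := hJ.ne_zero
  have hd0 : d ≠ 0 := hg.ne_zero
  have key : σ d * d = lam ^ n := by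
    have h : (σ d * d) * J.det = lam ^ n * J.det := by linear_combination hdet
    exact mul_right_cancel₀ hJ0 h
  have hσk : σ (lam ^ k) = lam ^ k := by rw [map_pow, hfix]
  have hlk : (lam ^ k) ≠ 0 := pow_ne_zero _ hlam
  set z := d * (lam ^ k)⁻¹ with hz
  have hz0 : z ≠ 0 := mul_ne_zero hd0 (inv_ne_zero hlk)
  have hσz : σ z = σ d * (lam ^ k)⁻¹ := by
    rw [hz, _root_.map_mul, map_inv₀, hσk]
  have hzz : z * σ z = lam := by
    rw [hσz, hz]
    field_simp
    rw [hk] at key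
    linear_combination key
  refine ⟨z, hz0, hzz, ?_⟩
  have hmap : (z⁻¹ • g).map σ = (σ z)⁻¹ • g.map σ := by
    ext i j
    simp [Matrix.map_apply, map_inv₀]
  have hσz0 : σ z ≠ 0 := fun h => hz0 (by simpa using congrArg σ.symm h)
  rw [hmap, Matrix.transpose_smul, Matrix.smul_mul, Matrix.smul_mul,
    Matrix.mul_smul, hsim, smul_smul, smul_smul]
  rw [show (σ z)⁻¹ * z⁻¹ * lam = (z * σ z)⁻¹ * lam by ring, hzz,
    inv_mul_cancel₀ hlam, one_smul]
end

section
/- Let R be a commutative ring and a, b : ℕ → R. Define A_k = Σ_{i ≥ 0, 2i ≤ k} a_{k−2i}, B_m = Σ_{j ≥ 0, 2j ≤ m} b_{m−2j}, and C_r = Σ_{k,m ≥ 0, 2k+m = r} A_k · B_m for integers r ≥ 0, with the convention C_r = 0 for r < 0. Then for every r ≥ 0: C_r − C_{r−2} − C_{r−4} + C_{r−6} = Σ_{k,m ≥ 0, 2k+m = r} a_k · b_m. -/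
open Finset

private def extZ {R : Type*} [CommRing R] (f : ℕ → R) : ℤ → R :=
  fun n => if 0 ≤ n then f n.toNat else 0

private lemma extZ_ofNat {R : Type*} [CommRing R] (f : ℕ → R) (n : ℕ) :
    extZ f (n : ℤ) = f n := by simp [extZ]

private lemma extZ_neg {R : Type*} [CommRing R] (f : ℕ → R) {n : ℤ} (h : n < 0) :
    extZ f n = 0 := by simp [extZ, not_le.2 h]

private lemma step_rec {R : Type*} [CommRing R] (a A : ℕ → R)
    (hA : ∀ k : ℕ, A k = ∑ i ∈ Finset.range (k / 2 + 1), a (k - 2 * i)) :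
    ∀ k : ℤ, extZ A k = extZ a k + extZ A (k - 2) := by
  intro k
  rcases lt_or_ge k 0 with h | h
  · rw [extZ_neg _ h, extZ_neg _ h, extZ_neg _ (by omega)]; ring
  · lift k to ℕ using h
    rw [extZ_ofNat, extZ_ofNat]
    rcases Nat.lt_or_ge k 2 with hk | hk
    · rw [extZ_neg _ (by omega), hA]
      interval_cases k <;> simp
    · have hk2 : (k : ℤ) - 2 = ((k - 2 : ℕ) : ℤ) := by omega
      rw [hk2, extZ_ofNat, hA k, hA (k - 2)]
      have hdiv : k / 2 + 1 = ((k - 2) / 2 + 1) + 1 := by omega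
      rw [hdiv, Finset.sum_range_succ']
      have hterm : ∀ i, a (k - 2 * (i + 1)) = a ((k - 2) - 2 * i) := by
        intro i; congr 1; omega
      rw [Finset.sum_congr rfl (fun i _ => hterm i)]
      simp [add_comm]

private lemma sum_ext {R : Type*} [CommRing R] (f g : ℕ → R) (r N : ℕ) (h : r < 2 * N) :
    ∑ k ∈ Finset.range N, extZ f (k : ℤ) * extZ g ((r : ℤ) - 2 * k)
      = ∑ k ∈ Finset.range (r / 2 + 1), f k * g (r - 2 * k) := by
  have hsub : Finset.range (r / 2 + 1) ⊆ Finset.range N :=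
    Finset.range_subset_range.2 (by omega)
  rw [← Finset.sum_subset hsub]
  · apply Finset.sum_congr rfl
    intro k hk
    have hk' : 2 * k ≤ r := by
      have := Finset.mem_range.1 hk; omega
    have hcast : (r : ℤ) - 2 * k = ((r - 2 * k : ℕ) : ℤ) := by omega
    rw [hcast, extZ_ofNat, extZ_ofNat]
  · intro k _ hk'
    have hk2 : ¬ k < r / 2 + 1 := fun hh => hk' (Finset.mem_range.2 hh)
    have : (r : ℤ) - 2 * k < 0 := by omega
    rw [extZ_neg _ this, mul_zero]

private lemma sum_shift {R : Type*} [CommRing R] (F g : ℤ → R)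
    (hF : ∀ k : ℤ, k < 0 → F k = 0) (hg : ∀ m : ℤ, m < 0 → g m = 0)
    (r : ℤ) (N : ℕ) (h : r < 2 * N) :
    ∑ k ∈ Finset.range N, F (k : ℤ) * g (r - 4 - 2 * k)
      = ∑ k ∈ Finset.range N, F ((k : ℤ) - 2) * g (r - 2 * k) := by
  have hext : ∑ k ∈ Finset.range N, F ((k : ℤ) - 2) * g (r - 2 * k)
      = ∑ k ∈ Finset.range (N + 2), F ((k : ℤ) - 2) * g (r - 2 * k) := by
    apply Finset.sum_subset (Finset.range_subset_range.2 (by omega))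
    intro k hk hk'
    have hk1 : ¬ k < N := fun hh => hk' (Finset.mem_range.2 hh)
    have : r - 2 * (k : ℤ) < 0 := by
      have := Finset.mem_range.1 hk; omega
    rw [hg _ this, mul_zero]
  rw [hext, Finset.sum_range_succ', Finset.sum_range_succ']
  have h0 : F ((0 : ℕ) - 2 : ℤ) = 0 := hF _ (by norm_num)
  have h1 : F (((0 + 1 : ℕ) : ℤ) - 2) = 0 := hF _ (by norm_num)
  rw [h0, h1, zero_mul, zero_mul, add_zero, add_zero]
  apply Finset.sum_congr rfl
  intro i _
  have e1 : ((i + 1 + 1 : ℕ) : ℤ) - 2 = (i : ℤ) := by push_cast; ring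
  have e2 : r - 2 * ((i + 1 + 1 : ℕ) : ℤ) = r - 4 - 2 * i := by push_cast; ring
  rw [e1, e2]

private lemma C_eval {R : Type*} [CommRing R] (A B : ℕ → R) (C : ℤ → R)
    (hCneg : ∀ r : ℤ, r < 0 → C r = 0)
    (hC : ∀ r : ℕ, C r = ∑ k ∈ Finset.range (r / 2 + 1), A k * B (r - 2 * k))
    (r : ℤ) (N : ℕ) (h : r < 2 * N) :
    C r = ∑ k ∈ Finset.range N, extZ A (k : ℤ) * extZ B (r - 2 * k) := by
  rcases lt_or_ge r 0 with hr | hr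
  · rw [hCneg r hr]
    symm
    apply Finset.sum_eq_zero
    intro k _
    rw [extZ_neg B (by omega), mul_zero]
  · lift r to ℕ using hr
    rw [hC r, ← sum_ext A B r N (by exact_mod_cast h)]

/-- Let `R` be a commutative ring and `a, b : ℕ → R`. With
`A_k = Σ_{2i ≤ k} a_{k-2i}`, `B_m = Σ_{2j ≤ m} b_{m-2j}`,
`C_r = Σ_{2k+m = r} A_k · B_m` for `r ≥ 0` and `C_r = 0` for `r < 0`, one has, for every
`r ≥ 0`: `C_r - C_{r-2} - C_{r-4} + C_{r-6} = Σ_{2k+m = r} a_k · b_m`. -/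
theorem C_alternating_sum {R : Type*} [CommRing R] (a b : ℕ → R)
    (A B : ℕ → R) (C : ℤ → R)
    (hA : ∀ k : ℕ, A k = ∑ i ∈ Finset.range (k / 2 + 1), a (k - 2 * i))
    (hB : ∀ m : ℕ, B m = ∑ j ∈ Finset.range (m / 2 + 1), b (m - 2 * j))
    (hCneg : ∀ r : ℤ, r < 0 → C r = 0)
    (hC : ∀ r : ℕ, C r = ∑ k ∈ Finset.range (r / 2 + 1), A k * B (r - 2 * k))
    (r : ℕ) :
    C r - C ((r : ℤ) - 2) - C ((r : ℤ) - 4) + C ((r : ℤ) - 6) =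
      ∑ k ∈ Finset.range (r / 2 + 1), a k * b (r - 2 * k) := by
  set N := r + 1 with hNdef
  have hAstep := step_rec a A hA
  have hBstep := step_rec b B hB
  have h1 := C_eval A B C hCneg hC (r : ℤ) N (by omega)
  have h2 := C_eval A B C hCneg hC ((r : ℤ) - 2) N (by omega)
  have h3 := C_eval A B C hCneg hC ((r : ℤ) - 4) N (by omega)
  have h4 := C_eval A B C hCneg hC ((r : ℤ) - 6) N (by omega)
  rw [h1, h2, h3, h4, ← sum_ext a b r N (by omega)]
  have e1 : (∑ k ∈ Finset.range N, extZ A (k : ℤ) * extZ B ((r : ℤ) - 2 * k))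
      - (∑ k ∈ Finset.range N, extZ A (k : ℤ) * extZ B ((r : ℤ) - 2 - 2 * k))
      = ∑ k ∈ Finset.range N, extZ A (k : ℤ) * extZ b ((r : ℤ) - 2 * k) := by
    rw [← Finset.sum_sub_distrib]
    apply Finset.sum_congr rfl
    intro k _
    have := hBstep ((r : ℤ) - 2 * k)
    have harg : (r : ℤ) - 2 * k - 2 = (r : ℤ) - 2 - 2 * k := by ring
    rw [harg] at this
    rw [this]; ring
  have e2 : (∑ k ∈ Finset.range N, extZ A (k : ℤ) * extZ B ((r : ℤ) - 4 - 2 * k))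
      - (∑ k ∈ Finset.range N, extZ A (k : ℤ) * extZ B ((r : ℤ) - 6 - 2 * k))
      = ∑ k ∈ Finset.range N, extZ A (k : ℤ) * extZ b ((r : ℤ) - 4 - 2 * k) := by
    rw [← Finset.sum_sub_distrib]
    apply Finset.sum_congr rfl
    intro k _
    have := hBstep ((r : ℤ) - 4 - 2 * k)
    have harg : (r : ℤ) - 4 - 2 * k - 2 = (r : ℤ) - 6 - 2 * k := by ring
    rw [harg] at this
    rw [this]; ring
  have eshift : ∑ k ∈ Finset.range N, extZ A (k : ℤ) * extZ b ((r : ℤ) - 4 - 2 * k)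
      = ∑ k ∈ Finset.range N, extZ A ((k : ℤ) - 2) * extZ b ((r : ℤ) - 2 * k) :=
    sum_shift (extZ A) (extZ b) (fun k hk => extZ_neg A hk) (fun m hm => extZ_neg b hm)
      (r : ℤ) N (by omega)
  calc (∑ k ∈ Finset.range N, extZ A (k : ℤ) * extZ B ((r : ℤ) - 2 * k))
      - (∑ k ∈ Finset.range N, extZ A (k : ℤ) * extZ B ((r : ℤ) - 2 - 2 * k))
      - (∑ k ∈ Finset.range N, extZ A (k : ℤ) * extZ B ((r : ℤ) - 4 - 2 * k))
      + (∑ k ∈ Finset.range N, extZ A (k : ℤ) * extZ B ((r : ℤ) - 6 - 2 * k))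
      = (∑ k ∈ Finset.range N, extZ A (k : ℤ) * extZ b ((r : ℤ) - 2 * k))
        - (∑ k ∈ Finset.range N, extZ A (k : ℤ) * extZ b ((r : ℤ) - 4 - 2 * k)) := by
        rw [← e1, ← e2]; ring
    _ = ∑ k ∈ Finset.range N, extZ a (k : ℤ) * extZ b ((r : ℤ) - 2 * k) := by
        rw [eshift, ← Finset.sum_sub_distrib]
        apply Finset.sum_congr rfl
        intro k _
        have := hAstep (k : ℤ)
        rw [this]; ring
end
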